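/- Let N_H ≥ 1, f ≥ 1, h ≥ 1 and let R ∈ ℝ with 0 ≤ R ≤ 1. Under the uniform distribution on all N_H^{h·f} h-tuples (F_1, …, F_h) of N_H × f column-regular binary matrices, the probability that the number of initially extractable columns is strictly less than R·f is at most 1 − Σ_{e=⌈R·f⌉}^{f} Θ(N_H, f, h, e) / N_H^{h·f}. -/

import Mathlib

/-- The weight of row `i` of a binary matrix `F`: the number of nonzero entries in row `i`. -/
def rowWeight {m n : ℕ} (F : Matrix (Fin m) (Fin n) Bool) (i : Fin m) : ℕ :=
  (Finset.univ.filter (fun j => F i j = true)).card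

/-- The weight of column `j` of a binary matrix `F`: the number of nonzero entries in column `j`. -/
def colWeight {m n : ℕ} (F : Matrix (Fin m) (Fin n) Bool) (j : Fin n) : ℕ :=
  (Finset.univ.filter (fun i => F i j = true)).card

/-- A binary matrix is column-regular if every column contains exactly one nonzero entry. -/
def ColRegular {m n : ℕ} (F : Matrix (Fin m) (Fin n) Bool) : Prop :=
  ∀ j, colWeight F j = 1

/-- A stopping matrix: a column-regular binary matrix with no row of weight one. -/
def IsStopping {m n : ℕ} (F : Matrix (Fin m) (Fin n) Bool) : Prop :=
  ColRegular F ∧ ∀ i, rowWeight F i ≠ 1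

instance {m n : ℕ} (F : Matrix (Fin m) (Fin n) Bool) : Decidable (ColRegular F) :=
  inferInstanceAs (Decidable (∀ j, colWeight F j = 1))

instance {m n : ℕ} (F : Matrix (Fin m) (Fin n) Bool) : Decidable (IsStopping F) :=
  inferInstanceAs (Decidable (ColRegular F ∧ ∀ i, rowWeight F i ≠ 1))

/-- `z m n` is the number of `m × n` stopping matrices. -/
def z (m n : ℕ) : ℕ :=
  Fintype.card {F : Matrix (Fin m) (Fin n) Bool // IsStopping F}

/-- `Psi h e b` is the number of `h`-tuples `(C 1, …, C h)` of subsets of a fixed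
`e`-element set with `|C i| = b i` for every `i` and whose union is the whole set. -/
def Psi (h e : ℕ) (b : Fin h → ℕ) : ℕ :=
  Fintype.card {C : Fin h → Finset (Fin e) //
    (∀ i, (C i).card = b i) ∧ Finset.univ.biUnion C = Finset.univ}

/-- In a column-regular matrix, column `j` is pivotal if the (unique) row containing the
nonzero entry of column `j` has weight one. -/
def Pivotal {m n : ℕ} (F : Matrix (Fin m) (Fin n) Bool) (j : Fin n) : Prop :=
  ∃ i, F i j = true ∧ rowWeight F i = 1

instance {m n : ℕ} (F : Matrix (Fin m) (Fin n) Bool) (j : Fin n) : Decidable (Pivotal F j) :=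
  inferInstanceAs (Decidable (∃ i, F i j = true ∧ rowWeight F i = 1))

/-- Given an `h`-tuple of matrices, column `j` is initially extractable if it is pivotal
in at least one matrix of the tuple. -/
def Extractable {m n h : ℕ} (G : Fin h → Matrix (Fin m) (Fin n) Bool) (j : Fin n) : Prop :=
  ∃ i, Pivotal (G i) j

instance {m n h : ℕ} (G : Fin h → Matrix (Fin m) (Fin n) Bool) (j : Fin n) :
    Decidable (Extractable G j) :=
  inferInstanceAs (Decidable (∃ i, Pivotal (G i) j))

/-- The count `Θ(N_H, f, h, e)` from Lemma 2. -/
def Theta (NH f h e : ℕ) : ℕ :=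
  f.choose e * ∑ b ∈ Fintype.piFinset (fun _ : Fin h => Finset.range (e + 1)),
    Psi h e b * ∏ i, (NH.choose (b i) * (b i).factorial * z (NH - b i) (f - b i))



open Finset

section Build
variable {NH f b : ℕ}

lemma compl_card (C : Finset (Fin f)) (hC : C.card = b) : Cᶜ.card = f - b := by
  rw [Finset.card_compl, hC, Fintype.card_fin]

def rowsOf (σ : Fin b ↪ Fin NH) : Finset (Fin NH) := Finset.univ.map σ

lemma rowsOf_compl_card (σ : Fin b ↪ Fin NH) : (rowsOf σ)ᶜ.card = NH - b := by
  rw [Finset.card_compl, rowsOf, Finset.card_map, Finset.card_univ, Fintype.card_fin,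
    Fintype.card_fin]

def buildF (C : Finset (Fin f)) (hC : C.card = b) (σ : Fin b ↪ Fin NH)
    (S : Matrix (Fin (NH - b)) (Fin (f - b)) Bool) : Matrix (Fin NH) (Fin f) Bool :=
  fun i j =>
    if hj : j ∈ C then decide (i = σ ((C.orderIsoOfFin hC).symm ⟨j, hj⟩))
    else if hi : i ∈ (rowsOf σ)ᶜ then
      S (((rowsOf σ)ᶜ.orderIsoOfFin (rowsOf_compl_card σ)).symm ⟨i, hi⟩)
        ((Cᶜ.orderIsoOfFin (compl_card C hC)).symm ⟨j, Finset.mem_compl.mpr hj⟩)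
    else false

variable (C : Finset (Fin f)) (hC : C.card = b) (σ : Fin b ↪ Fin NH)
    (S : Matrix (Fin (NH - b)) (Fin (f - b)) Bool)

lemma buildF_apply_mem {i j} (hj : j ∈ C) :
    buildF C hC σ S i j = decide (i = σ ((C.orderIsoOfFin hC).symm ⟨j, hj⟩)) := by
  simp [buildF, hj]

lemma buildF_apply_notMem {i j} (hj : j ∉ C) (hi : i ∈ (rowsOf σ)ᶜ) :
    buildF C hC σ S i j =
      S (((rowsOf σ)ᶜ.orderIsoOfFin (rowsOf_compl_card σ)).symm ⟨i, hi⟩)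
        ((Cᶜ.orderIsoOfFin (compl_card C hC)).symm ⟨j, Finset.mem_compl.mpr hj⟩) := by
  simp [buildF, hj, hi]

lemma buildF_apply_notMem_rows {i j} (hj : j ∉ C) (hi : i ∉ (rowsOf σ)ᶜ) :
    buildF C hC σ S i j = false := by
  simp [buildF, hj, hi]

lemma card_filter_orderIso {α : Type*} [Fintype α] [LinearOrder α] {m : ℕ}
    (t : Finset α) (ht : t.card = m) (s : Finset α) (u : Finset (Fin m))
    (hs : ∀ a ∈ s, a ∈ t)
    (hmem : ∀ (a : α) (ha : a ∈ t), (a ∈ s ↔ (t.orderIsoOfFin ht).symm ⟨a, ha⟩ ∈ u)) :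
    s.card = u.card := by
  refine Finset.card_bij' (fun a ha => (t.orderIsoOfFin ht).symm ⟨a, hs a ha⟩)
    (fun k _ => ↑(t.orderIsoOfFin ht k)) ?_ ?_ ?_ ?_
  · intro a ha; exact (hmem a (hs a ha)).mp ha
  · intro k hk
    have h1 : (↑(t.orderIsoOfFin ht k) : α) ∈ t := (t.orderIsoOfFin ht k).2
    refine (hmem _ h1).mpr ?_
    have h2 : (⟨↑(t.orderIsoOfFin ht k), h1⟩ : {x // x ∈ t}) = t.orderIsoOfFin ht k := rfl
    rw [h2]
    simpa using hk
  · intro a ha; simp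
  · intro k hk
    show (t.orderIsoOfFin ht).symm ⟨↑(t.orderIsoOfFin ht k), _⟩ = k
    have h1 : (⟨↑(t.orderIsoOfFin ht k), (t.orderIsoOfFin ht k).2⟩ : {x // x ∈ t})
        = t.orderIsoOfFin ht k := rfl
    rw [h1]
    simp
lemma colWeight_buildF_mem {j} (hj : j ∈ C) : colWeight (buildF C hC σ S) j = 1 := by
  rw [colWeight, show (univ.filter fun i => buildF C hC σ S i j = true)
      = {σ ((C.orderIsoOfFin hC).symm ⟨j, hj⟩)} from by
    ext i
    simp only [mem_filter, mem_univ, true_and, mem_singleton]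
    rw [buildF_apply_mem C hC σ S hj, decide_eq_true_eq]]
  exact Finset.card_singleton _

lemma colWeight_buildF_notMem {j} (hj : j ∉ C) :
    colWeight (buildF C hC σ S) j
      = colWeight S ((Cᶜ.orderIsoOfFin (compl_card C hC)).symm ⟨j, Finset.mem_compl.mpr hj⟩) := by
  rw [colWeight, colWeight]
  refine card_filter_orderIso ((rowsOf σ)ᶜ) (rowsOf_compl_card σ) _ _ ?_ ?_
  · intro i hi
    simp only [mem_filter, mem_univ, true_and] at hi
    by_contra hi'
    rw [buildF_apply_notMem_rows C hC σ S hj hi'] at hi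
    cases hi
  · intro i hi
    simp only [mem_filter, mem_univ, true_and]
    rw [buildF_apply_notMem C hC σ S hj hi]

lemma rowWeight_buildF_rows (k : Fin b) : rowWeight (buildF C hC σ S) (σ k) = 1 := by
  rw [rowWeight, show (univ.filter fun j => buildF C hC σ S (σ k) j = true)
      = {(↑(C.orderIsoOfFin hC k) : Fin f)} from ?_]
  · exact Finset.card_singleton _
  · have hrow : σ k ∉ (rowsOf σ)ᶜ := by simp [rowsOf]
    ext j
    simp only [mem_filter, mem_univ, true_and, mem_singleton]
    constructor
    · intro hj'
      by_cases hj : j ∈ C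
      · rw [buildF_apply_mem C hC σ S hj, decide_eq_true_eq] at hj'
        have hk : (C.orderIsoOfFin hC).symm ⟨j, hj⟩ = k := (σ.injective hj'.symm)
        have := congrArg (fun x => ((C.orderIsoOfFin hC) x : Fin f)) hk
        simpa using this
      · rw [buildF_apply_notMem_rows C hC σ S hj hrow] at hj'
        cases hj'
    · rintro rfl
      rw [buildF_apply_mem C hC σ S (C.orderIsoOfFin hC k).2, decide_eq_true_eq]
      congr 1
      have h1 : (⟨↑(C.orderIsoOfFin hC k), (C.orderIsoOfFin hC k).2⟩ : {x // x ∈ C})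
          = C.orderIsoOfFin hC k := rfl
      rw [h1, OrderIso.symm_apply_apply]

lemma rowWeight_buildF_notRows {i} (hi : i ∈ (rowsOf σ)ᶜ) :
    rowWeight (buildF C hC σ S) i
      = rowWeight S (((rowsOf σ)ᶜ.orderIsoOfFin (rowsOf_compl_card σ)).symm ⟨i, hi⟩) := by
  rw [rowWeight, rowWeight]
  refine card_filter_orderIso Cᶜ (compl_card C hC) _ _ ?_ ?_
  · intro j hj
    simp only [mem_filter, mem_univ, true_and] at hj
    by_contra hj'
    rw [Finset.mem_compl, not_not] at hj'
    rw [buildF_apply_mem C hC σ S hj', decide_eq_true_eq] at hj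
    rw [Finset.mem_compl] at hi
    exact hi (by simp [rowsOf, hj])
  · intro j hj
    simp only [mem_filter, mem_univ, true_and]
    rw [buildF_apply_notMem C hC σ S (Finset.mem_compl.mp hj) hi]

lemma colRegular_buildF (hS : IsStopping S) : ColRegular (buildF C hC σ S) := by
  intro j
  by_cases hj : j ∈ C
  · exact colWeight_buildF_mem C hC σ S hj
  · rw [colWeight_buildF_notMem C hC σ S hj]
    exact hS.1 _

lemma pivotal_buildF_iff (hS : IsStopping S) {j} :
    Pivotal (buildF C hC σ S) j ↔ j ∈ C := by
  constructor
  · rintro ⟨i, hij, hrw⟩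
    by_contra hj
    by_cases hi : i ∈ (rowsOf σ)ᶜ
    · rw [rowWeight_buildF_notRows C hC σ S hi] at hrw
      exact hS.2 _ hrw
    · rw [buildF_apply_notMem_rows C hC σ S hj hi] at hij
      cases hij
  · intro hj
    refine ⟨σ ((C.orderIsoOfFin hC).symm ⟨j, hj⟩), ?_, rowWeight_buildF_rows C hC σ S _⟩
    rw [buildF_apply_mem C hC σ S hj, decide_eq_true_eq]

def pivSet {m n : ℕ} (F : Matrix (Fin m) (Fin n) Bool) : Finset (Fin n) :=
  Finset.univ.filter (fun j => Pivotal F j)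

lemma pivSet_buildF (hS : IsStopping S) : pivSet (buildF C hC σ S) = C := by
  ext j
  simp [pivSet, pivotal_buildF_iff C hC σ S hS]

lemma buildF_inj {C C' : Finset (Fin f)} {hC : C.card = b} {hC' : C'.card = b}
    {σ σ' : Fin b ↪ Fin NH} {S S' : Matrix (Fin (NH - b)) (Fin (f - b)) Bool}
    (hS : IsStopping S) (hS' : IsStopping S')
    (h : buildF C hC σ S = buildF C' hC' σ' S') : C = C' ∧ σ = σ' ∧ S = S' := by
  have hCC : C = C' := by
    rw [← pivSet_buildF C hC σ S hS, ← pivSet_buildF C' hC' σ' S' hS', h]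
  subst hCC
  have hσ : σ = σ' := by
    apply DFunLike.ext
    intro k
    have hj : (↑(C.orderIsoOfFin hC k) : Fin f) ∈ C := (C.orderIsoOfFin hC k).2
    have h1 := congrFun (congrFun h (σ' k)) ↑(C.orderIsoOfFin hC k)
    rw [buildF_apply_mem C hC σ S hj, buildF_apply_mem C hC' σ' S' hj] at h1
    have h2 : (⟨↑(C.orderIsoOfFin hC k), hj⟩ : {x // x ∈ C}) = C.orderIsoOfFin hC k := rfl
    rw [h2, OrderIso.symm_apply_apply] at h1
    simp only [decide_eq_true_eq, decide_eq_decide] at h1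
    exact (h1.mpr trivial).symm
  subst hσ
  refine ⟨rfl, rfl, ?_⟩
  ext r c
  have hi : (↑((rowsOf σ)ᶜ.orderIsoOfFin (rowsOf_compl_card σ) r) : Fin NH) ∈ (rowsOf σ)ᶜ :=
    ((rowsOf σ)ᶜ.orderIsoOfFin (rowsOf_compl_card σ) r).2
  have hj : (↑(Cᶜ.orderIsoOfFin (compl_card C hC) c) : Fin f) ∉ C :=
    Finset.mem_compl.mp (Cᶜ.orderIsoOfFin (compl_card C hC) c).2
  have h1 := congrFun (congrFun h ↑((rowsOf σ)ᶜ.orderIsoOfFin (rowsOf_compl_card σ) r))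
    ↑(Cᶜ.orderIsoOfFin (compl_card C hC) c)
  rw [buildF_apply_notMem C hC σ S hj hi, buildF_apply_notMem C hC' σ S' hj hi] at h1
  have h2 : (⟨↑((rowsOf σ)ᶜ.orderIsoOfFin (rowsOf_compl_card σ) r), hi⟩ : {x // x ∈ (rowsOf σ)ᶜ})
      = (rowsOf σ)ᶜ.orderIsoOfFin (rowsOf_compl_card σ) r := rfl
  have h3 : (⟨↑(Cᶜ.orderIsoOfFin (compl_card C hC) c), Finset.mem_compl.mpr hj⟩ : {x // x ∈ Cᶜ})
      = Cᶜ.orderIsoOfFin (compl_card C hC) c := rfl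
  rw [h2, h3, OrderIso.symm_apply_apply, OrderIso.symm_apply_apply] at h1
  exact h1
end Build

section Count
open Finset
variable {NH f h : ℕ}

def colFun (r : Fin f → Fin NH) : Matrix (Fin NH) (Fin f) Bool := fun i j => decide (i = r j)

lemma colRegular_colFun (r : Fin f → Fin NH) : ColRegular (colFun r) := by
  intro j
  rw [colWeight, show (univ.filter fun i => colFun r i j = true) = {r j} from by
    ext i; simp [colFun]]
  exact Finset.card_singleton _

lemma card_colRegular : Fintype.card {F : Matrix (Fin NH) (Fin f) Bool // ColRegular F}
    = NH ^ f := by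
  have hbij : Function.Bijective
      (fun r : Fin f → Fin NH => (⟨colFun r, colRegular_colFun r⟩ : {F // ColRegular F})) := by
    constructor
    · intro r r' hrr
      have h1 : colFun r = colFun r' := congrArg Subtype.val hrr
      funext j
      have h2 := congrFun (congrFun h1 (r j)) j
      simp only [colFun, decide_eq_decide] at h2
      exact h2.mp trivial
    · rintro ⟨F, hF⟩
      have h1 : ∀ j, ∃ a, univ.filter (fun i => F i j = true) = {a} := fun j =>
        Finset.card_eq_one.mp (hF j)
      choose r hr using h1
      refine ⟨r, Subtype.ext ?_⟩
      funext i j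
      have hmem : F i j = true ↔ i = r j := by
        constructor
        · intro hb
          have hmm : i ∈ univ.filter (fun i => F i j = true) := by simp [hb]
          rw [hr j] at hmm
          simpa using hmm
        · intro hb
          have hmm : i ∈ ({r j} : Finset (Fin NH)) := by simp [hb]
          rw [← hr j] at hmm
          simpa using hmm
      show colFun r i j = F i j
      rcases Bool.eq_false_or_eq_true (F i j) with hb | hb
      · rw [hb]
        simp [colFun, hmem.mp hb]
      · rw [hb]
        have hne : ¬ (i = r j) := fun hir => by
          rw [hmem.mpr hir] at hb
          cases hb
        simp [colFun, hne]
  calc Fintype.card {F : Matrix (Fin NH) (Fin f) Bool // ColRegular F}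
      = Fintype.card (Fin f → Fin NH) := (Fintype.card_of_bijective hbij).symm
    _ = NH ^ f := by simp

lemma card_regTuples :
    Fintype.card {G : Fin h → Matrix (Fin NH) (Fin f) Bool // ∀ i, ColRegular (G i)}
      = NH ^ (h * f) := by
  rw [Fintype.card_congr (Equiv.subtypePiEquivPi (p := fun _ (F : Matrix (Fin NH) (Fin f) Bool) => ColRegular F))]
  rw [Fintype.card_pi]
  simp only [card_colRegular]
  rw [Finset.prod_const, Finset.card_univ, Fintype.card_fin, ← pow_mul, mul_comm]

lemma map_biUnion' {α β γ : Type*} [DecidableEq α] [DecidableEq β] [DecidableEq γ]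
    (s : Finset α) (t : α → Finset β) (g : β ↪ γ) :
    (s.biUnion t).map g = s.biUnion fun a => (t a).map g := by
  simp only [Finset.map_eq_image]
  exact Finset.biUnion_image

lemma card_tupleSubsets {e : ℕ} (E : Finset (Fin f)) (hE : E.card = e) (bv : Fin h → ℕ) :
    Fintype.card {C : Fin h → Finset (Fin f) //
      (∀ i, (C i).card = bv i) ∧ Finset.univ.biUnion C = E} = Psi h e bv := by
  classical
  set ι := (E.orderEmbOfFin hE).toEmbedding with hι
  have hrange : ∀ x ∈ E, ∃ a, ι a = x := by
    intro x hx
    have := (Finset.range_orderEmbOfFin E hE).symm ▸ (Finset.mem_coe.mpr hx)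
    obtain ⟨a, ha⟩ := this
    exact ⟨a, ha⟩
  have hmapuniv : (Finset.univ : Finset (Fin e)).map ι = E := by
    apply Finset.eq_of_subset_of_card_le
    · intro x hx
      obtain ⟨a, _, rfl⟩ := Finset.mem_map.mp hx
      exact Finset.orderEmbOfFin_mem E hE a
    · rw [Finset.card_map, Finset.card_univ, Fintype.card_fin, hE]
  symm
  apply Fintype.card_of_bijective
    (f := fun C : {C : Fin h → Finset (Fin e) //
        (∀ i, (C i).card = bv i) ∧ Finset.univ.biUnion C = Finset.univ} =>
      (⟨fun i => (C.1 i).map ι, fun i => by rw [Finset.card_map, C.2.1 i], by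
        rw [← map_biUnion', C.2.2, hmapuniv]⟩ :
        {C : Fin h → Finset (Fin f) // (∀ i, (C i).card = bv i) ∧ Finset.univ.biUnion C = E}))
  constructor
  · intro C C' hCC
    have h1 : (fun i => (C.1 i).map ι) = fun i => (C'.1 i).map ι :=
      congrArg Subtype.val hCC
    apply Subtype.ext
    funext i
    exact Finset.map_injective ι (congrFun h1 i)
  · rintro ⟨D, hD1, hD2⟩
    have hDE : ∀ i, D i ⊆ E := by
      intro i
      rw [← hD2]
      exact Finset.subset_biUnion_of_mem D (Finset.mem_univ i)
    have hmap : ∀ i, ((D i).preimage ι ι.injective.injOn).map ι = D i := by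
      intro i
      ext x
      simp only [Finset.mem_map, Finset.mem_preimage]
      constructor
      · rintro ⟨a, ha, rfl⟩; exact ha
      · intro hx
        obtain ⟨a, rfl⟩ := hrange x (hDE i hx)
        exact ⟨a, hx, rfl⟩
    refine ⟨⟨fun i => (D i).preimage ι ι.injective.injOn, ?_, ?_⟩, ?_⟩
    · intro i
      rw [← hD1 i, ← hmap i, Finset.card_map]
    · apply Finset.map_injective ι
      rw [map_biUnion', hmapuniv]
      conv_rhs => rw [← hD2]
      apply Finset.biUnion_congr rfl
      intro i _
      exact hmap i
    · apply Subtype.ext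
      funext i
      exact hmap i
end Count

section Tuple
open Finset
variable {NH f h : ℕ}

abbrev Dom (NH f h : ℕ) (E : Finset (Fin f)) (bv : Fin h → ℕ) : Type :=
  {C : Fin h → Finset (Fin f) // (∀ i, (C i).card = bv i) ∧ Finset.univ.biUnion C = E}
  × ((i : Fin h) → (Fin (bv i) ↪ Fin NH)
      × {S : Matrix (Fin (NH - bv i)) (Fin (f - bv i)) Bool // IsStopping S})

lemma card_Dom {e : ℕ} (E : Finset (Fin f)) (hE : E.card = e) (bv : Fin h → ℕ) :
    Fintype.card (Dom NH f h E bv)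
      = Psi h e bv * ∏ i, (NH.choose (bv i) * (bv i).factorial * z (NH - bv i) (f - bv i)) := by
  rw [show Fintype.card (Dom NH f h E bv) = _ * _ from Fintype.card_prod _ _,
    card_tupleSubsets E hE bv, Fintype.card_pi]
  congr 1
  apply Finset.prod_congr rfl
  intro i _
  rw [Fintype.card_prod, Fintype.card_embedding_eq, Fintype.card_fin, Fintype.card_fin,
    Nat.descFactorial_eq_factorial_mul_choose, z]
  ring

def toTuple (E : Finset (Fin f)) (bv : Fin h → ℕ) (d : Dom NH f h E bv) :
    Fin h → Matrix (Fin NH) (Fin f) Bool :=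
  fun i => buildF (d.1.1 i) (d.1.2.1 i) (d.2 i).1 (d.2 i).2.1

lemma toTuple_pivSet (E : Finset (Fin f)) (bv : Fin h → ℕ) (d : Dom NH f h E bv) (i : Fin h) :
    pivSet (toTuple E bv d i) = d.1.1 i :=
  pivSet_buildF _ _ _ _ (d.2 i).2.2

lemma toTuple_mem (E : Finset (Fin f)) (bv : Fin h → ℕ) (d : Dom NH f h E bv) :
    (∀ i, ColRegular (toTuple E bv d i)) ∧
      (Finset.univ.biUnion fun i => pivSet (toTuple E bv d i)) = E ∧
      ∀ i, (pivSet (toTuple E bv d i)).card = bv i := by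
  refine ⟨fun i => colRegular_buildF _ _ _ _ (d.2 i).2.2, ?_, fun i => ?_⟩
  · rw [show (fun i => pivSet (toTuple E bv d i)) = d.1.1 from
      funext fun i => toTuple_pivSet E bv d i]
    exact d.1.2.2
  · rw [toTuple_pivSet E bv d i, d.1.2.1 i]

lemma toTuple_injective (E : Finset (Fin f)) (bv : Fin h → ℕ) :
    Function.Injective (toTuple (NH := NH) E bv) := by
  intro d d' hdd
  have hcomp : ∀ i, d.1.1 i = d'.1.1 i ∧ (d.2 i).1 = (d'.2 i).1 ∧ (d.2 i).2.1 = (d'.2 i).2.1 :=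
    fun i => buildF_inj (d.2 i).2.2 (d'.2 i).2.2 (congrFun hdd i)
  have h1 : d.1 = d'.1 := Subtype.ext (funext fun i => (hcomp i).1)
  have h2 : d.2 = d'.2 := by
    funext i
    exact Prod.ext (hcomp i).2.1 (Subtype.ext (hcomp i).2.2)
  exact Prod.ext h1 h2

/-- The target finset for fixed `E` and `bv`. -/
def TS (NH f h : ℕ) (E : Finset (Fin f)) (bv : Fin h → ℕ) :
    Finset (Fin h → Matrix (Fin NH) (Fin f) Bool) :=
  Finset.univ.filter (fun G => (∀ i, ColRegular (G i)) ∧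
    (Finset.univ.biUnion fun i => pivSet (G i)) = E ∧ ∀ i, (pivSet (G i)).card = bv i)

lemma card_Dom_le (E : Finset (Fin f)) (bv : Fin h → ℕ) :
    Fintype.card (Dom NH f h E bv) ≤ (TS NH f h E bv).card := by
  rw [← Fintype.card_coe (TS NH f h E bv)]
  apply Fintype.card_le_of_injective
    (f := fun d => (⟨toTuple E bv d, by
      simp only [TS, Finset.mem_filter, Finset.mem_univ, true_and]
      exact toTuple_mem E bv d⟩ : {G // G ∈ TS NH f h E bv}))
  intro d d' hdd
  exact toTuple_injective E bv (congrArg Subtype.val hdd)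

/-- The target finset for fixed `E`. -/
def TE (NH f h : ℕ) (E : Finset (Fin f)) : Finset (Fin h → Matrix (Fin NH) (Fin f) Bool) :=
  Finset.univ.filter (fun G => (∀ i, ColRegular (G i)) ∧
    (Finset.univ.biUnion fun i => pivSet (G i)) = E)

lemma inner_le_TE {e : ℕ} (E : Finset (Fin f)) (hE : E.card = e) :
    ∑ bv ∈ Fintype.piFinset (fun _ : Fin h => Finset.range (e + 1)),
        Psi h e bv * ∏ i, (NH.choose (bv i) * (bv i).factorial * z (NH - bv i) (f - bv i))
      ≤ (TE NH f h E).card := by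
  have h1 : ∀ bv ∈ Fintype.piFinset (fun _ : Fin h => Finset.range (e + 1)),
      Psi h e bv * ∏ i, (NH.choose (bv i) * (bv i).factorial * z (NH - bv i) (f - bv i))
        ≤ (TS NH f h E bv).card := by
    intro bv _
    rw [← card_Dom E hE bv]
    exact card_Dom_le E bv
  calc ∑ bv ∈ Fintype.piFinset (fun _ : Fin h => Finset.range (e + 1)),
        Psi h e bv * ∏ i, (NH.choose (bv i) * (bv i).factorial * z (NH - bv i) (f - bv i))
      ≤ ∑ bv ∈ Fintype.piFinset (fun _ : Fin h => Finset.range (e + 1)),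
          (TS NH f h E bv).card := Finset.sum_le_sum h1
    _ = ((Fintype.piFinset (fun _ : Fin h => Finset.range (e + 1))).biUnion
          (TS NH f h E)).card := by
        rw [Finset.card_biUnion]
        intro bv _ bv' _ hbv
        rw [Function.onFun, Finset.disjoint_left]
        intro G hG hG'
        simp only [TS, Finset.mem_filter] at hG hG'
        exact hbv (funext fun i => by rw [← hG.2.2.2 i, ← hG'.2.2.2 i])
    _ ≤ (TE NH f h E).card := by
        apply Finset.card_le_card
        intro G hG
        simp only [Finset.mem_biUnion] at hG
        obtain ⟨bv, _, hG⟩ := hG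
        simp only [TS, Finset.mem_filter] at hG
        simp only [TE, Finset.mem_filter]
        exact ⟨hG.1, hG.2.1, hG.2.2.1⟩

lemma sum_Theta_le (m : ℕ) :
    ∑ e ∈ Finset.Icc m f, Theta NH f h e ≤
      (Finset.univ.filter (fun G : Fin h → Matrix (Fin NH) (Fin f) Bool =>
        (∀ i, ColRegular (G i)) ∧
          m ≤ (Finset.univ.biUnion fun i => pivSet (G i)).card)).card := by
  have hTheta : ∀ e ∈ Finset.Icc m f,
      Theta NH f h e ≤ ∑ E ∈ Finset.univ.powersetCard e, (TE NH f h E).card := by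
    intro e _
    have h2 : ∀ E ∈ (Finset.univ : Finset (Fin f)).powersetCard e, E.card = e := by
      intro E hE
      exact (Finset.mem_powersetCard.mp hE).2
    calc Theta NH f h e
        = ∑ _E ∈ Finset.univ.powersetCard e,
            ∑ bv ∈ Fintype.piFinset (fun _ : Fin h => Finset.range (e + 1)),
              Psi h e bv * ∏ i,
                (NH.choose (bv i) * (bv i).factorial * z (NH - bv i) (f - bv i)) := by
          rw [Finset.sum_const, Theta, Finset.card_powersetCard, Finset.card_univ,
            Fintype.card_fin, smul_eq_mul]
      _ ≤ ∑ E ∈ Finset.univ.powersetCard e, (TE NH f h E).card :=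
          Finset.sum_le_sum fun E hE => inner_le_TE E (h2 E hE)
  calc ∑ e ∈ Finset.Icc m f, Theta NH f h e
      ≤ ∑ e ∈ Finset.Icc m f, ∑ E ∈ Finset.univ.powersetCard e, (TE NH f h E).card :=
        Finset.sum_le_sum hTheta
    _ = ∑ E ∈ (Finset.Icc m f).biUnion (fun e => Finset.univ.powersetCard e),
          (TE NH f h E).card := by
        rw [Finset.sum_biUnion]
        intro e he e' he' hee
        simp only [Function.onFun]
        rw [Finset.disjoint_left]
        intro E hE hE'
        exact hee (by rw [← (Finset.mem_powersetCard.mp hE).2,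
          ← (Finset.mem_powersetCard.mp hE').2])
    _ = (((Finset.Icc m f).biUnion (fun e => Finset.univ.powersetCard e)).biUnion
          (TE NH f h)).card := by
        rw [Finset.card_biUnion]
        intro E _ E' _ hEE
        rw [Function.onFun, Finset.disjoint_left]
        intro G hG hG'
        simp only [TE, Finset.mem_filter] at hG hG'
        exact hEE (by rw [← hG.2.2, ← hG'.2.2])
    _ ≤ _ := by
        apply Finset.card_le_card
        intro G hG
        simp only [Finset.mem_biUnion] at hG
        obtain ⟨E, hEmem, hG⟩ := hG
        obtain ⟨e, he, hEe⟩ := hEmem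
        simp only [TE, Finset.mem_filter] at hG
        simp only [Finset.mem_filter, Finset.mem_univ, true_and]
        refine ⟨hG.2.1, ?_⟩
        rw [hG.2.2, (Finset.mem_powersetCard.mp hEe).2]
        exact (Finset.mem_Icc.mp he).1
end Tuple

lemma extSet_eq {NH f h : ℕ} (G : Fin h → Matrix (Fin NH) (Fin f) Bool) :
    Finset.univ.filter (fun j => Extractable G j)
      = Finset.univ.biUnion fun i => pivSet (G i) := by
  ext j
  rw [Finset.mem_filter]
  simp [Extractable, pivSet]


/-- (Theorem 2.) For `N_H ≥ 1`, `f ≥ 1`, `h ≥ 1` and a desired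
extraction rate `R ∈ [0, 1]`, under the uniform distribution on all `N_H^{h·f}`
`h`-tuples of `N_H × f` column-regular binary matrices, the probability that the number
of initially extractable columns is strictly less than `R·f` is at most
`1 − Σ_{e=⌈R·f⌉}^{f} Θ(N_H, f, h, e) / N_H^{h·f}`. -/
theorem extraction_failure_probability_bound (NH f h : ℕ)
    (hNH : 1 ≤ NH) (hf : 1 ≤ f) (hh : 1 ≤ h) (R : ℝ) (hR0 : 0 ≤ R) (hR1 : R ≤ 1) :
    (Nat.card {G : Fin h → Matrix (Fin NH) (Fin f) Bool //
          (∀ i, ColRegular (G i)) ∧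
          ((Finset.univ.filter (fun j => Extractable G j)).card : ℝ) < R * f} : ℝ) /
        (NH : ℝ) ^ (h * f) ≤
      1 - (∑ e ∈ Finset.Icc ⌈R * (f : ℝ)⌉₊ f, (Theta NH f h e : ℝ)) /
        (NH : ℝ) ^ (h * f) := by
  classical
  set m := ⌈R * (f : ℝ)⌉₊ with hm
  set A : Finset (Fin h → Matrix (Fin NH) (Fin f) Bool) :=
    Finset.univ.filter (fun G => (∀ i, ColRegular (G i)) ∧
      ((Finset.univ.filter (fun j => Extractable G j)).card : ℝ) < R * f) with hA
  set B : Finset (Fin h → Matrix (Fin NH) (Fin f) Bool) :=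
    Finset.univ.filter (fun G => (∀ i, ColRegular (G i)) ∧
      m ≤ (Finset.univ.biUnion fun i => pivSet (G i)).card) with hB
  have hcardA : Nat.card {G : Fin h → Matrix (Fin NH) (Fin f) Bool //
      (∀ i, ColRegular (G i)) ∧
      ((Finset.univ.filter (fun j => Extractable G j)).card : ℝ) < R * f} = A.card := by
    rw [Nat.card_eq_fintype_card]
    rw [hA]
    convert Fintype.card_subtype _
  have hdisj : Disjoint A B := by
    rw [Finset.disjoint_left]
    intro G hGA hGB
    simp only [hA, Finset.mem_filter] at hGA
    simp only [hB, Finset.mem_filter] at hGB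
    have h1 : (Finset.univ.filter (fun j => Extractable G j)).card < m := by
      rw [hm]
      exact Nat.lt_ceil.mpr hGA.2.2
    rw [extSet_eq G] at h1
    exact absurd hGB.2.2 (Nat.not_le.mpr h1)
  have hreg : (Finset.univ.filter
      (fun G : Fin h → Matrix (Fin NH) (Fin f) Bool => ∀ i, ColRegular (G i))).card
      = NH ^ (h * f) := by
    rw [← Fintype.card_subtype]
    exact card_regTuples
  have hAB : (A ∪ B).card ≤ NH ^ (h * f) := by
    rw [← hreg]
    apply Finset.card_le_card
    intro G hG
    simp only [Finset.mem_union, hA, hB, Finset.mem_filter] at hG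
    simp only [Finset.mem_filter, Finset.mem_univ, true_and]
    rcases hG with hG | hG
    · exact hG.2.1
    · exact hG.2.1
  have hsum : ∑ e ∈ Finset.Icc m f, Theta NH f h e ≤ B.card := sum_Theta_le m
  have key : A.card + ∑ e ∈ Finset.Icc m f, Theta NH f h e ≤ NH ^ (h * f) := by
    calc A.card + ∑ e ∈ Finset.Icc m f, Theta NH f h e
        ≤ A.card + B.card := Nat.add_le_add_left hsum _
      _ = (A ∪ B).card := (Finset.card_union_of_disjoint hdisj).symm
      _ ≤ NH ^ (h * f) := hAB
  have hP : (0 : ℝ) < (NH : ℝ) ^ (h * f) :=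
    pow_pos (by exact_mod_cast hNH) _
  have h2 : (A.card : ℝ) + (∑ e ∈ Finset.Icc m f, (Theta NH f h e : ℝ)) ≤ (NH : ℝ) ^ (h * f) := by
    exact_mod_cast key
  rw [hcardA]
  have h3 : 1 - (∑ e ∈ Finset.Icc m f, (Theta NH f h e : ℝ)) / (NH : ℝ) ^ (h * f)
      = ((NH : ℝ) ^ (h * f) - ∑ e ∈ Finset.Icc m f, (Theta NH f h e : ℝ)) / (NH : ℝ) ^ (h * f) := by
    field_simp
  rw [h3, div_le_div_iff_of_pos_right hP]
  linarith
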